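/- Let T be a finite simple group, k ≥ 3, and X = T^k.(Out(T) × S_k) a primitive group of simple diagonal type on Ω with point stabilizer X_ω = {(t,...,t) : t ∈ Aut(T)}.(S_k) ≅ Aut(T) × S_k acting diagonally. Let t ∈ T be an element not conjugate in Aut(T) to t^{-1}, and g = (t, 1, ..., 1). Then X_ω g X_ω ≠ X_ω g^{-1} X_ω; consequently the coset graph Cos(X, X_ω, X_ω{g, g^{-1}}X_ω) is X-edge-transitive but not X-arc-transitive. -/

import Mathlib

/-- The action of `Aut(T) × S_k` on `T^k`: the automorphism is applied
diagonally and the permutation permutes coordinates. -/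
def diagAut {T : Type*} [Group T] {k : ℕ} :
    MulAut T × Equiv.Perm (Fin k) →* MulAut (Fin k → T) where
  toFun p :=
    { toFun := fun f i => p.1 (f (p.2⁻¹ i))
      invFun := fun f i => p.1⁻¹ (f (p.2 i))
      left_inv := fun f => by ext i; simp
      right_inv := fun f => by ext i; simp
      map_mul' := fun f g => by ext i; simp [Pi.mul_apply] }
  map_one' := by ext f i; simp
  map_mul' := fun p q => by ext f i; simp

/-- The lift to `T^k ⋊ (Aut(T) × S_k)` of the point stabilizer
`X_ω = D.(Out(T) × S_k)` of the diagonal-type action: the elements whose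
`T^k`-part is a constant tuple. -/
def diagStab (T : Type*) [Group T] (k : ℕ) :
    Subgroup ((Fin k → T) ⋊[diagAut] (MulAut T × Equiv.Perm (Fin k))) where
  carrier := {w | ∃ s : T, w.left = fun _ => s}
  one_mem' := ⟨1, rfl⟩
  mul_mem' := by
    rintro a b ⟨s, hs⟩ ⟨u, hu⟩
    exact ⟨s * a.right.1 u, by
      rw [SemidirectProduct.mul_left, hs, hu]
      rfl⟩
  inv_mem' := by
    rintro a ⟨s, hs⟩
    exact ⟨a.right.1⁻¹ s⁻¹, by
      rw [SemidirectProduct.inv_left, hs]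
      rfl⟩

/-- The double coset `HgH`. -/
def doubleCoset {X : Type*} [Group X] (H : Subgroup X) (g : X) : Set X :=
  {z | ∃ h₁ ∈ H, ∃ h₂ ∈ H, z = h₁ * g * h₂}

/-- The set of right cosets `Hx` of `H` in `X`. -/
abbrev RightCoset {X : Type*} [Group X] (H : Subgroup X) :=
  Quotient (QuotientGroup.rightRel H)

/-- The right coset `Hx`. -/
def rmk {X : Type*} [Group X] (H : Subgroup X) (x : X) : RightCoset H :=
  Quotient.mk (QuotientGroup.rightRel H) x


lemma rmk_eq_iff {X : Type*} [Group X] (H : Subgroup X) (a b : X) :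
    rmk H a = rmk H b ↔ b * a⁻¹ ∈ H := by
  rw [rmk, rmk, Quotient.eq]
  exact QuotientGroup.rightRel_apply

lemma rmk_mul_right {X : Type*} [Group X] (H : Subgroup X) {a b : X}
    (h : rmk H a = rmk H b) (c : X) : rmk H (a * c) = rmk H (b * c) := by
  rw [rmk_eq_iff] at h ⊢
  have e : b * c * (a * c)⁻¹ = b * a⁻¹ := by group
  rw [e]; exact h

lemma rmk_transfer {X : Type*} [Group X] (H : Subgroup X) {a b c z₁ z₂ : X}
    (h1 : rmk H (a * z₁) = rmk H c) (h2 : rmk H (b * z₂) = rmk H c) :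
    rmk H (a * (z₁ * z₂⁻¹)) = rmk H b := by
  have := rmk_mul_right H (h1.trans h2.symm) z₂⁻¹
  rw [mul_assoc, mul_inv_cancel_right] at this
  exact this

lemma edge_norm {X : Type*} [Group X] (H : Subgroup X) (g x y : X)
    (h : y * x⁻¹ ∈ doubleCoset H g ∪ doubleCoset H g⁻¹) :
    ∃ z, (rmk H (x * z) = rmk H 1 ∧ rmk H (y * z) = rmk H g) ∨
         (rmk H (x * z) = rmk H g ∧ rmk H (y * z) = rmk H 1) := by
  rcases h with ⟨h₁, hh₁, h₂, hh₂, he⟩ | ⟨h₁, hh₁, h₂, hh₂, he⟩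
  · refine ⟨x⁻¹ * h₂⁻¹, Or.inl ⟨?_, ?_⟩⟩
    · rw [rmk_eq_iff]
      have e : 1 * (x * (x⁻¹ * h₂⁻¹))⁻¹ = h₂ := by group
      rw [e]; exact hh₂
    · rw [rmk_eq_iff]
      have e : y * (x⁻¹ * h₂⁻¹) = h₁ * g := by
        rw [← mul_assoc, he]; group
      rw [e]
      have e2 : g * (h₁ * g)⁻¹ = h₁⁻¹ := by group
      rw [e2]; exact H.inv_mem hh₁
  · refine ⟨x⁻¹ * h₂⁻¹ * g, Or.inr ⟨?_, ?_⟩⟩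
    · rw [rmk_eq_iff]
      have e : g * (x * (x⁻¹ * h₂⁻¹ * g))⁻¹ = h₂ := by group
      rw [e]; exact hh₂
    · rw [rmk_eq_iff]
      have e : y * (x⁻¹ * h₂⁻¹ * g) = h₁ := by
        rw [← mul_assoc, ← mul_assoc, he]; group
      rw [e]
      have e2 : 1 * h₁⁻¹ = h₁⁻¹ := by group
      rw [e2]; exact H.inv_mem hh₁

lemma key_notmem {T : Type*} [Group T] {k : ℕ} (hk : 3 ≤ k)
    (t : T) (hconj : ¬ ∃ α : MulAut T, α t = t⁻¹)
    (gv : Fin k → T) (hgv : gv = fun i => if i.val = 0 then t else 1)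
    (g : (Fin k → T) ⋊[diagAut] (MulAut T × Equiv.Perm (Fin k))) (hg : g = ⟨gv, 1⟩) :
    g⁻¹ ∉ doubleCoset (diagStab T k) g := by
  rintro ⟨h₁, ⟨s, hs⟩, h₂, ⟨u, hu⟩, heq⟩
  have ht1 : t ≠ 1 := fun h => hconj ⟨1, by simp [h]⟩
  set α := h₁.right.1 with hα
  set σ := h₁.right.2 with hσ
  have hL : ∀ i : Fin k, s * (α (gv (σ⁻¹ i))) * (α u) = (gv i)⁻¹ := by
    intro i
    have h := congrFun (congrArg SemidirectProduct.left heq) i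
    simp only [SemidirectProduct.mul_left, SemidirectProduct.inv_left, hg, hs, hu,
      Pi.mul_apply, Pi.inv_apply, mul_one, map_one, one_mul, inv_one,
      SemidirectProduct.mul_right] at h
    simpa [diagAut, ← hα, ← hσ] using h.symm
  set i0 : Fin k := ⟨0, by omega⟩ with hi0
  have gv0 : gv i0 = t := by rw [hgv]; simp [hi0]
  have gvne : ∀ v : Fin k, v ≠ i0 → gv v = 1 := by
    intro v hv; rw [hgv]
    exact if_neg (fun h => hv (Fin.ext h))
  set j : Fin k := if σ i0 = ⟨1, by omega⟩ then ⟨2, by omega⟩ else ⟨1, by omega⟩ with hj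
  have hjne0 : j ≠ i0 := by
    rw [hj]; split <;> (intro h; exact absurd (congrArg Fin.val h) (by simp [hi0]))
  have hjneσ : j ≠ σ i0 := by
    rw [hj]; split
    · rename_i h; rw [h]; intro h2; exact absurd (congrArg Fin.val h2) (by simp)
    · rename_i h; intro h2; exact h (h2 ▸ rfl)
  have hinvj : σ⁻¹ j ≠ i0 := fun h =>
    hjneσ (by rw [← h, ← Equiv.Perm.mul_apply, mul_inv_cancel, Equiv.Perm.one_apply])
  have hsc : s * α u = 1 := by
    have h := hL j
    rw [gvne _ hinvj, gvne _ hjne0, map_one, mul_one, inv_one] at h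
    exact h
  by_cases hcase : σ i0 = i0
  · have hinv0 : σ⁻¹ i0 = i0 := by
      have h2 := congrArg σ.symm hcase
      rw [Equiv.symm_apply_apply] at h2
      exact h2.symm
    have h0 := hL i0
    rw [hinv0, gv0] at h0
    have hus : α u = s⁻¹ := eq_inv_of_mul_eq_one_right hsc
    rw [hus] at h0
    exact hconj ⟨MulAut.conj s * α, by
      simpa [MulAut.conj_apply, mul_assoc] using h0⟩
  · have hinv0 : σ⁻¹ i0 ≠ i0 := fun h =>
      hcase (by have h2 := congrArg σ h; rw [← Equiv.Perm.mul_apply, mul_inv_cancel, Equiv.Perm.one_apply] at h2; exact h2.symm)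
    have h0 := hL i0
    rw [gvne _ hinv0, gv0, map_one, mul_one, hsc] at h0
    exact ht1 (inv_eq_one.mp h0.symm)

/-- Let `T` be a finite simple group, `k ≥ 3`, and take the
group `X = T^k ⋊ (Aut(T) × S_k)` covering the primitive group of simple
diagonal type, with (lifted) point stabilizer `H = diagStab T k` corresponding
to `X_ω ≅ Aut(T) × S_k`. Let `t ∈ T` be an element which is not conjugate in
`Aut(T)` to `t⁻¹`, and `g = (t,1,…,1)`. Then `X_ω g X_ω ≠ X_ω g⁻¹ X_ω`, and
consequently the coset graph `Cos(X, X_ω, X_ω{g,g⁻¹}X_ω)` is `X`-edge-transitive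
but not `X`-arc-transitive. -/
theorem stmt15 {T : Type*} [Group T] [Finite T] [IsSimpleGroup T]
    (k : ℕ) (hk : 3 ≤ k)
    (t : T) (hconj : ¬ ∃ α : MulAut T, α t = t⁻¹)
    (gv : Fin k → T) (hgv : gv = fun i => if i.val = 0 then t else 1)
    (g : (Fin k → T) ⋊[diagAut] (MulAut T × Equiv.Perm (Fin k)))
    (hg : g = ⟨gv, 1⟩) :
    -- the two double cosets are different
    doubleCoset (diagStab T k) g ≠ doubleCoset (diagStab T k) g⁻¹ ∧
    -- the coset graph is X-edge-transitive ...
    (∀ x y x' y' : (Fin k → T) ⋊[diagAut] (MulAut T × Equiv.Perm (Fin k)),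
      y * x⁻¹ ∈ doubleCoset (diagStab T k) g ∪ doubleCoset (diagStab T k) g⁻¹ →
      y' * x'⁻¹ ∈ doubleCoset (diagStab T k) g ∪ doubleCoset (diagStab T k) g⁻¹ →
      ∃ z : (Fin k → T) ⋊[diagAut] (MulAut T × Equiv.Perm (Fin k)),
        (rmk (diagStab T k) (x * z) = rmk (diagStab T k) x' ∧
          rmk (diagStab T k) (y * z) = rmk (diagStab T k) y') ∨
        (rmk (diagStab T k) (x * z) = rmk (diagStab T k) y' ∧
          rmk (diagStab T k) (y * z) = rmk (diagStab T k) x')) ∧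
    -- ... but not X-arc-transitive
    ¬ (∀ x y x' y' : (Fin k → T) ⋊[diagAut] (MulAut T × Equiv.Perm (Fin k)),
      y * x⁻¹ ∈ doubleCoset (diagStab T k) g ∪ doubleCoset (diagStab T k) g⁻¹ →
      y' * x'⁻¹ ∈ doubleCoset (diagStab T k) g ∪ doubleCoset (diagStab T k) g⁻¹ →
      ∃ z : (Fin k → T) ⋊[diagAut] (MulAut T × Equiv.Perm (Fin k)),
        rmk (diagStab T k) (x * z) = rmk (diagStab T k) x' ∧
        rmk (diagStab T k) (y * z) = rmk (diagStab T k) y') := by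
  have key := key_notmem hk t hconj gv hgv g hg
  refine ⟨?_, ?_, ?_⟩
  · intro h
    have hmem : g⁻¹ ∈ doubleCoset (diagStab T k) g⁻¹ :=
      ⟨1, one_mem _, 1, one_mem _, by group⟩
    rw [← h] at hmem
    exact key hmem
  · intro x y x' y' hxy hx'y'
    obtain ⟨z₁, c₁⟩ := edge_norm (diagStab T k) g x y hxy
    obtain ⟨z₂, c₂⟩ := edge_norm (diagStab T k) g x' y' hx'y'
    refine ⟨z₁ * z₂⁻¹, ?_⟩
    rcases c₁ with ⟨c₁₁, c₁₂⟩ | ⟨c₁₁, c₁₂⟩ <;> rcases c₂ with ⟨c₂₁, c₂₂⟩ | ⟨c₂₁, c₂₂⟩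
    · exact Or.inl ⟨rmk_transfer _ c₁₁ c₂₁, rmk_transfer _ c₁₂ c₂₂⟩
    · exact Or.inr ⟨rmk_transfer _ c₁₁ c₂₂, rmk_transfer _ c₁₂ c₂₁⟩
    · exact Or.inr ⟨rmk_transfer _ c₁₁ c₂₂, rmk_transfer _ c₁₂ c₂₁⟩
    · exact Or.inl ⟨rmk_transfer _ c₁₁ c₂₁, rmk_transfer _ c₁₂ c₂₂⟩
  · intro harc
    obtain ⟨z, hz1, hz2⟩ := harc 1 g g 1
      (Or.inl ⟨1, one_mem _, 1, one_mem _, by group⟩)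
      (Or.inr ⟨1, one_mem _, 1, one_mem _, by group⟩)
    rw [rmk_eq_iff] at hz1 hz2
    -- hz1 : g * (1 * z)⁻¹ ∈ H, hz2 : 1 * (g * z)⁻¹ ∈ H
    have m1 : g * z⁻¹ ∈ diagStab T k := by simpa using hz1
    have m2 : z⁻¹ * g⁻¹ ∈ diagStab T k := by
      have : (1 : _) * (g * z)⁻¹ = z⁻¹ * g⁻¹ := by group
      rwa [this] at hz2
    exact key ⟨_, m2, _, (diagStab T k).inv_mem m1, by group⟩
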